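/- If x_1,...,x_s are independent Poisson random variables each of parameter t/s, and ω = e^{2πi/s}, then the complex random variables z = Σ_{r=1}^s ω^r x_r (for varying t > 0) form a convolution semigroup: the s-Bessel law of parameter t convolved with the s-Bessel law of parameter t' is the s-Bessel law of parameter t + t'. -/

import Mathlib

open MeasureTheory ProbabilityTheory Complex
open scoped NNReal ENNReal

/-- The `s`-Bessel law of parameter `t > 0`: the distribution of
`∑_{r=1}^s e^{2πir/s} x_r` where `x_1,…,x_s` are independent Poisson
variables of parameter `t/s`, viewed as a probability measure on `ℂ`. -/
noncomputable def besselLaw (s : ℕ) (t : ℝ≥0) : Measure ℂ :=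
  Measure.map
    (fun x : Fin s → ℕ =>
      ∑ r : Fin s, Complex.exp (2 * Real.pi * Complex.I * (r.val + 1) / s) * (x r : ℂ))
    (Measure.pi fun _ : Fin s => ((poissonPMF (t / s)).toMeasure))

/- Auxiliary lemma: the real Vandermonde-type identity for Poisson weights. -/
lemma poissonPMFReal_conv_sum (a b : ℝ≥0) (n : ℕ) :
    ∑ k ∈ Finset.range (n + 1), poissonPMFReal a k * poissonPMFReal b (n - k)
      = poissonPMFReal (a + b) n := by
  unfold poissonPMFReal
  push_cast
  rw [neg_add, Real.exp_add, add_pow]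
  rw [Finset.mul_sum, Finset.sum_div]
  refine Finset.sum_congr rfl fun k hk => ?_
  have hk' : k ≤ n := Nat.lt_succ_iff.mp (Finset.mem_range.mp hk)
  have hfact : (k.factorial : ℝ) * (n - k).factorial * (n.choose k) = n.factorial := by
    rw [← Nat.choose_mul_factorial_mul_factorial hk']
    push_cast
    ring
  have h1 : (k.factorial : ℝ) ≠ 0 := Nat.cast_ne_zero.mpr k.factorial_ne_zero
  have h2 : ((n - k).factorial : ℝ) ≠ 0 := Nat.cast_ne_zero.mpr (n - k).factorial_ne_zero
  have h3 : (n.factorial : ℝ) ≠ 0 := Nat.cast_ne_zero.mpr n.factorial_ne_zero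
  field_simp
  rw [← hfact]
  ring

/-- Convolution of Poisson distributions. -/
lemma poisson_conv (a b : ℝ≥0) :
    Measure.conv ((poissonPMF a).toMeasure) ((poissonPMF b).toMeasure)
      = (poissonPMF (a + b)).toMeasure := by
  refine Measure.ext_of_singleton fun n => ?_
  unfold Measure.conv
  rw [Measure.map_apply measurable_add (measurableSet_singleton n)]
  have hpre : (fun p : ℕ × ℕ => p.1 + p.2) ⁻¹' {n}
      = ⋃ k ∈ Finset.range (n + 1), ({k} ×ˢ {n - k} : Set (ℕ × ℕ)) := by
    ext ⟨x, y⟩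
    simp only [Set.mem_preimage, Set.mem_singleton_iff, Set.mem_iUnion, Finset.mem_range,
      Set.mem_prod, exists_prop]
    constructor
    · rintro rfl; exact ⟨x, by omega, rfl, by omega⟩
    · rintro ⟨k, hk, rfl, rfl⟩; omega
  rw [hpre, measure_biUnion_finset ?_ (fun k _ => (MeasurableSet.singleton k).prod
      (MeasurableSet.singleton (n - k)))]
  · rw [PMF.toMeasure_apply_singleton _ _ (measurableSet_singleton n)]
    have key : ∀ k, ((poissonPMF a).toMeasure.prod (poissonPMF b).toMeasure)
        ({k} ×ˢ {n - k} : Set (ℕ × ℕ))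
        = ENNReal.ofReal (poissonPMFReal a k * poissonPMFReal b (n - k)) := by
      intro k
      rw [Measure.prod_prod, PMF.toMeasure_apply_singleton _ _ (measurableSet_singleton k),
        PMF.toMeasure_apply_singleton _ _ (measurableSet_singleton (n - k))]
      exact (ENNReal.ofReal_mul poissonPMFReal_nonneg).symm
    simp_rw [key]
    rw [← ENNReal.ofReal_sum_of_nonneg fun k _ =>
      mul_nonneg poissonPMFReal_nonneg poissonPMFReal_nonneg]
    rw [poissonPMFReal_conv_sum]
    rfl
  · intro i _ j _ hij
    simp only [Function.onFun, Set.disjoint_left]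
    rintro ⟨x, y⟩ ⟨hx, _⟩ ⟨hx', _⟩
    exact hij (hx ▸ hx')

/-- Convolution of products of measures is the product of convolutions. -/
lemma pi_conv {ι : Type*} [Fintype ι] (μ ν : ι → Measure ℕ)
    [∀ i, IsProbabilityMeasure (μ i)] [∀ i, IsProbabilityMeasure (ν i)] :
    Measure.conv (Measure.pi μ) (Measure.pi ν)
      = Measure.pi (fun i => Measure.conv (μ i) (ν i)) := by
  unfold Measure.conv
  rw [← (measurePreserving_arrowProdEquivProdArrow ℕ ℕ ι μ ν).map_eq,
    Measure.map_map measurable_add (MeasurableEquiv.arrowProdEquivProdArrow ℕ ℕ ι).measurable]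
  have heq : ((fun p : (ι → ℕ) × (ι → ℕ) => p.1 + p.2) ∘
      (MeasurableEquiv.arrowProdEquivProdArrow ℕ ℕ ι))
      = fun (f : ι → ℕ × ℕ) (i : ι) => (f i).1 + (f i).2 := rfl
  rw [heq]
  exact (measurePreserving_pi _ _ (fun i => ⟨measurable_add, rfl⟩)).map_eq

/-- Convolution commutes with pushforward under an additive map. -/
lemma conv_map_addHom {A B : Type*} [AddMonoid A] [AddMonoid B] [MeasurableSpace A]
    [MeasurableSpace B] [MeasurableAdd₂ A] [MeasurableAdd₂ B] (F : A → B) (hF : Measurable F)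
    (hadd : ∀ x y, F (x + y) = F x + F y) (μ ν : Measure A) [SFinite μ] [SFinite ν] :
    Measure.conv (μ.map F) (ν.map F) = (Measure.conv μ ν).map F := by
  unfold Measure.conv
  rw [Measure.map_prod_map _ _ hF hF, Measure.map_map measurable_add (hF.prodMap hF),
    Measure.map_map hF measurable_add]
  congr 1
  ext p
  exact (hadd p.1 p.2).symm

/-- The `s`-Bessel laws form a convolution semigroup: the `s`-Bessel law of
parameter `t` convolved with the `s`-Bessel law of parameter `t'` is the
`s`-Bessel law of parameter `t + t'`. -/
theorem besselLaw_conv (s : ℕ) (hs : 1 ≤ s) (t t' : ℝ≥0) (ht : 0 < t) (ht' : 0 < t') :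
    Measure.conv (besselLaw s t) (besselLaw s t') = besselLaw s (t + t') := by
  set F : (Fin s → ℕ) → ℂ := fun x =>
    ∑ r : Fin s, Complex.exp (2 * Real.pi * Complex.I * (r.val + 1) / s) * (x r : ℂ) with hF_def
  have hF : Measurable F :=
    Finset.measurable_sum _ fun r _ =>
      (measurable_const.mul ((measurable_of_countable _).comp (measurable_pi_apply r)))
  have hadd : ∀ x y : Fin s → ℕ, F (x + y) = F x + F y := by
    intro x y
    simp only [hF_def, Pi.add_apply, Nat.cast_add, mul_add]
    exact Finset.sum_add_distrib
  unfold besselLaw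
  rw [conv_map_addHom F hF hadd, pi_conv]
  congr 1
  have : t / s + t' / s = (t + t') / s := (add_div t t' (s : ℝ≥0)).symm
  simp_rw [poisson_conv, this]
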